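/- Let c1, c2, c3 : I → ℝ be differentiable positive functions on an open interval I ⊆ ℝ satisfying, for every cyclic permutation (i, j, k) of (1, 2, 3), the self-duality equations d/dr (log c_i²) = −2 (c_j² + c_k² − c_i² − 2 c_j c_k). Define Ω_i := 2 c_j c_k for each cyclic permutation (i, j, k). Then Ω1, Ω2, Ω3 satisfy the classical Darboux–Halphen system: Ω̇_i = Ω_i(Ω_j + Ω_k) − Ω_j Ω_k for every cyclic permutation (i, j, k), equivalently Ω̇_i + Ω̇_j = 2 Ω_i Ω_j for all i ≠ j. -/

import Mathlib

/-- The curvature-wise self-duality equations for the Bianchi IX metric coefficients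
c₁, c₂, c₃ imply that Ωᵢ = 2cⱼcₖ satisfy the classical Darboux–Halphen system,
equivalently Ω̇ᵢ + Ω̇ⱼ = 2ΩᵢΩⱼ. -/
theorem bianchi_IX_self_duality_to_darboux_halphen
    (I : Set ℝ) (hI : IsOpen I)
    (c1 c2 c3 : ℝ → ℝ)
    (hc1 : DifferentiableOn ℝ c1 I)
    (hc2 : DifferentiableOn ℝ c2 I)
    (hc3 : DifferentiableOn ℝ c3 I)
    (hc1pos : ∀ r ∈ I, 0 < c1 r)
    (hc2pos : ∀ r ∈ I, 0 < c2 r)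
    (hc3pos : ∀ r ∈ I, 0 < c3 r)
    (hsd1 : ∀ r ∈ I, deriv (fun s => Real.log ((c1 s)^2)) r =
      -2 * ((c2 r)^2 + (c3 r)^2 - (c1 r)^2 - 2 * (c2 r * c3 r)))
    (hsd2 : ∀ r ∈ I, deriv (fun s => Real.log ((c2 s)^2)) r =
      -2 * ((c3 r)^2 + (c1 r)^2 - (c2 r)^2 - 2 * (c3 r * c1 r)))
    (hsd3 : ∀ r ∈ I, deriv (fun s => Real.log ((c3 s)^2)) r =
      -2 * ((c1 r)^2 + (c2 r)^2 - (c3 r)^2 - 2 * (c1 r * c2 r)))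
    (Ω1 Ω2 Ω3 : ℝ → ℝ)
    (hΩ1 : ∀ r, Ω1 r = 2 * (c2 r * c3 r))
    (hΩ2 : ∀ r, Ω2 r = 2 * (c3 r * c1 r))
    (hΩ3 : ∀ r, Ω3 r = 2 * (c1 r * c2 r)) :
    ∀ r ∈ I,
      (deriv Ω1 r = Ω1 r * (Ω2 r + Ω3 r) - Ω2 r * Ω3 r) ∧
      (deriv Ω2 r = Ω2 r * (Ω3 r + Ω1 r) - Ω3 r * Ω1 r) ∧
      (deriv Ω3 r = Ω3 r * (Ω1 r + Ω2 r) - Ω1 r * Ω2 r) ∧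
      (deriv Ω1 r + deriv Ω2 r = 2 * (Ω1 r * Ω2 r)) ∧
      (deriv Ω2 r + deriv Ω3 r = 2 * (Ω2 r * Ω3 r)) ∧
      (deriv Ω1 r + deriv Ω3 r = 2 * (Ω1 r * Ω3 r)) := by
  intro r hr
  have hmem := hI.mem_nhds hr
  have h1 : DifferentiableAt ℝ c1 r := (hc1 r hr).differentiableAt hmem
  have h2 : DifferentiableAt ℝ c2 r := (hc2 r hr).differentiableAt hmem
  have h3 : DifferentiableAt ℝ c3 r := (hc3 r hr).differentiableAt hmem
  have n1 : c1 r ≠ 0 := (hc1pos r hr).ne'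
  have n2 : c2 r ≠ 0 := (hc2pos r hr).ne'
  have n3 : c3 r ≠ 0 := (hc3pos r hr).ne'
  have L1 : deriv (fun s => Real.log ((c1 s)^2)) r
      = (2 * c1 r ^ 1 * deriv c1 r) / (c1 r ^ 2) :=
    ((h1.hasDerivAt.pow 2).log (pow_ne_zero 2 n1)).deriv
  have L2 : deriv (fun s => Real.log ((c2 s)^2)) r
      = (2 * c2 r ^ 1 * deriv c2 r) / (c2 r ^ 2) :=
    ((h2.hasDerivAt.pow 2).log (pow_ne_zero 2 n2)).deriv
  have L3 : deriv (fun s => Real.log ((c3 s)^2)) r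
      = (2 * c3 r ^ 1 * deriv c3 r) / (c3 r ^ 2) :=
    ((h3.hasDerivAt.pow 2).log (pow_ne_zero 2 n3)).deriv
  have e1 : deriv c1 r = c1 r * ((c1 r)^2 + 2 * (c2 r * c3 r) - (c2 r)^2 - (c3 r)^2) := by
    have h := hsd1 r hr; rw [L1] at h; field_simp at h; exact mul_left_cancel₀ (mul_ne_zero two_ne_zero n1) (by linear_combination (2 * c1 r) * h)
  have e2 : deriv c2 r = c2 r * ((c2 r)^2 + 2 * (c3 r * c1 r) - (c3 r)^2 - (c1 r)^2) := by
    have h := hsd2 r hr; rw [L2] at h; field_simp at h; exact mul_left_cancel₀ (mul_ne_zero two_ne_zero n2) (by linear_combination (2 * c2 r) * h)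
  have e3 : deriv c3 r = c3 r * ((c3 r)^2 + 2 * (c1 r * c2 r) - (c1 r)^2 - (c2 r)^2) := by
    have h := hsd3 r hr; rw [L3] at h; field_simp at h; exact mul_left_cancel₀ (mul_ne_zero two_ne_zero n3) (by linear_combination (2 * c3 r) * h)
  have hf1 : Ω1 = fun s => 2 * (c2 s * c3 s) := funext hΩ1
  have hf2 : Ω2 = fun s => 2 * (c3 s * c1 s) := funext hΩ2
  have hf3 : Ω3 = fun s => 2 * (c1 s * c2 s) := funext hΩ3
  subst hf1 hf2 hf3
  have D1 : deriv (fun s => 2 * (c2 s * c3 s)) r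
      = 2 * (deriv c2 r * c3 r + c2 r * deriv c3 r) :=
    (((h2.hasDerivAt.mul h3.hasDerivAt).const_mul 2)).deriv
  have D2 : deriv (fun s => 2 * (c3 s * c1 s)) r
      = 2 * (deriv c3 r * c1 r + c3 r * deriv c1 r) :=
    (((h3.hasDerivAt.mul h1.hasDerivAt).const_mul 2)).deriv
  have D3 : deriv (fun s => 2 * (c1 s * c2 s)) r
      = 2 * (deriv c1 r * c2 r + c1 r * deriv c2 r) :=
    (((h1.hasDerivAt.mul h2.hasDerivAt).const_mul 2)).deriv
  refine ⟨?_, ?_, ?_, ?_, ?_, ?_⟩ <;>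
    simp only [D1, D2, D3, e1, e2, e3] <;> ring
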